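/- Let g₁, g₂ be nonzero, linearly independent vectors and define g_ConFIG = (⟪g₁,g_v⟫ + ⟪g₂,g_v⟫)·g_v with g_v = U(U(O(g₁,g₂)) + U(O(g₂,g₁))). Then ‖g_ConFIG‖ = √((1 + S_c(g₁,g₂))/2)·(‖g₁‖ + ‖g₂‖). -/

import Mathlib

open scoped RealInnerProductSpace

set_option maxHeartbeats 1000000 in
theorem stmt_17 {E : Type*} [NormedAddCommGroup E] [InnerProductSpace ℝ E]
    (g₁ g₂ : E) (h₁ : g₁ ≠ 0) (h₂ : g₂ ≠ 0)
    (hli : LinearIndependent ℝ ![g₁, g₂]) :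
    let O : E → E → E := fun u v => v - (⟪u, v⟫ / ‖u‖ ^ 2) • u
    let U : E → E := fun v => ‖v‖⁻¹ • v
    let gv : E := U (U (O g₁ g₂) + U (O g₂ g₁))
    let gConFIG : E := (⟪g₁, gv⟫ + ⟪g₂, gv⟫) • gv
    ‖gConFIG‖ = Real.sqrt ((1 + ⟪g₁, g₂⟫ / (‖g₁‖ * ‖g₂‖)) / 2) * (‖g₁‖ + ‖g₂‖) := by
  intro O U gv gConFIG
  have ha : (0:ℝ) < ‖g₁‖ := norm_pos_iff.2 h₁
  have hb : (0:ℝ) < ‖g₂‖ := norm_pos_iff.2 h₂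
  have hpair := LinearIndependent.pair_iff.1 hli
  -- strict Cauchy-Schwarz
  have h1 : ⟪g₁, g₂⟫ < ‖g₁‖ * ‖g₂‖ := by
    rw [inner_lt_norm_mul_iff_real]
    intro h
    exact hb.ne' (hpair ‖g₂‖ (-‖g₁‖) (by rw [neg_smul, h]; abel)).1
  have h2 : -⟪g₁, g₂⟫ < ‖g₁‖ * ‖g₂‖ := by
    have : ⟪-g₁, g₂⟫ < ‖(-g₁ : E)‖ * ‖g₂‖ := by
      rw [inner_lt_norm_mul_iff_real]
      intro h
      rw [norm_neg, smul_neg] at h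
      refine hb.ne' (hpair ‖g₂‖ ‖g₁‖ ?_).1
      rw [← neg_eq_iff_eq_neg.2 h.symm]; abel
    simpa [inner_neg_left] using this
  set a := ‖g₁‖ with hadef
  set b := ‖g₂‖ with hbdef
  set t := ⟪g₁, g₂⟫ with htdef
  set c : ℝ := t / (a * b) with hcdef
  have hab : (0:ℝ) < a * b := mul_pos ha hb
  have hc1 : c < 1 := (div_lt_one hab).2 h1
  have hc2 : -1 < c := by rw [hcdef, lt_div_iff₀ hab]; linarith
  set s : ℝ := Real.sqrt (1 - c ^ 2) with hsdef
  have hs0 : 0 < s := Real.sqrt_pos.2 (by nlinarith)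
  have hssq : s ^ 2 = 1 - c ^ 2 := Real.sq_sqrt (by nlinarith)
  -- the projected vectors
  set w₁ : E := g₂ - (t / a ^ 2) • g₁ with hw1def
  set w₂ : E := g₁ - (t / b ^ 2) • g₂ with hw2def
  have hO1 : O g₁ g₂ = w₁ := rfl
  have hO2 : O g₂ g₁ = w₂ := by
    show g₁ - (⟪g₂, g₁⟫ / b ^ 2) • g₂ = w₂
    rw [real_inner_comm, ← htdef]
  have i2 : ⟪g₂, g₂⟫ = b ^ 2 := real_inner_self_eq_norm_sq g₂
  have i1 : ⟪g₁, g₁⟫ = a ^ 2 := real_inner_self_eq_norm_sq g₁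
  have i21 : ⟪g₂, g₁⟫ = t := by rw [real_inner_comm, ← htdef]
  have i12 : ⟪g₁, g₂⟫ = t := htdef.symm
  -- key scalar identities
  have hbs : (b * s) ^ 2 = b ^ 2 - t ^ 2 / a ^ 2 := by
    rw [mul_pow, hssq, hcdef]; field_simp
  have has : (a * s) ^ 2 = a ^ 2 - t ^ 2 / b ^ 2 := by
    rw [mul_pow, hssq, hcdef]; field_simp
  -- inner products with w₁, w₂
  have j11 : ⟪g₁, w₁⟫ = 0 := by
    rw [hw1def, inner_sub_right, real_inner_smul_right, i1, i12]
    field_simp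
    ring
  have j22 : ⟪g₂, w₂⟫ = 0 := by
    rw [hw2def, inner_sub_right, real_inner_smul_right, i2, i21]
    field_simp
    ring
  have j21 : ⟪g₂, w₁⟫ = (b * s) ^ 2 := by
    rw [hw1def, inner_sub_right, real_inner_smul_right, i2, i21, hbs]
    ring
  have j12 : ⟪g₁, w₂⟫ = (a * s) ^ 2 := by
    rw [hw2def, inner_sub_right, real_inner_smul_right, i1, i12, has]
    ring
  have jw11 : ⟪w₁, w₁⟫ = (b * s) ^ 2 := by
    conv_lhs => rw [hw1def]
    rw [inner_sub_left, real_inner_smul_left, j11, j21]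
    ring
  have jw22 : ⟪w₂, w₂⟫ = (a * s) ^ 2 := by
    conv_lhs => rw [hw2def]
    rw [inner_sub_left, real_inner_smul_left, j22, j12]
    ring
  have jw12 : ⟪w₁, w₂⟫ = -t * s ^ 2 := by
    conv_lhs => rw [hw1def]
    rw [inner_sub_left, real_inner_smul_left, j22, j12]
    field_simp
    ring
  -- norms
  have nw1 : ‖w₁‖ = b * s := by
    rw [norm_eq_sqrt_real_inner, jw11, Real.sqrt_sq (by positivity)]
  have nw2 : ‖w₂‖ = a * s := by
    rw [norm_eq_sqrt_real_inner, jw22, Real.sqrt_sq (by positivity)]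
  set v : E := (b * s)⁻¹ • w₁ + (a * s)⁻¹ • w₂ with hvdef
  have hq0' : (0:ℝ) < 2 - 2 * c := by linarith
  set q : ℝ := Real.sqrt (2 - 2 * c) with hqdef
  have hq0 : 0 < q := Real.sqrt_pos.2 hq0'
  have hqsq : q ^ 2 = 2 - 2 * c := Real.sq_sqrt hq0'.le
  have jvv : ⟪v, v⟫ = q ^ 2 := by
    rw [hvdef]
    simp only [inner_add_left, inner_add_right, real_inner_smul_left,
      real_inner_smul_right, jw11, jw22, jw12, real_inner_comm w₁ w₂]
    rw [hqsq, hcdef]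
    field_simp
    ring
  have nv : ‖v‖ = q := by
    rw [norm_eq_sqrt_real_inner, jvv, Real.sqrt_sq hq0.le]
  have j1v : ⟪g₁, v⟫ = a * s := by
    rw [hvdef, inner_add_right, real_inner_smul_right, real_inner_smul_right,
      j11, j12]
    field_simp
    ring
  have j2v : ⟪g₂, v⟫ = b * s := by
    rw [hvdef, inner_add_right, real_inner_smul_right, real_inner_smul_right,
      j22, j21]
    field_simp
    ring
  have hgv : gv = q⁻¹ • v := by
    show ‖U (O g₁ g₂) + U (O g₂ g₁)‖⁻¹ • (U (O g₁ g₂) + U (O g₂ g₁)) = q⁻¹ • v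
    have hU1 : U (O g₁ g₂) = (b * s)⁻¹ • w₁ := by
      show ‖O g₁ g₂‖⁻¹ • O g₁ g₂ = _
      rw [hO1, nw1]
    have hU2 : U (O g₂ g₁) = (a * s)⁻¹ • w₂ := by
      show ‖O g₂ g₁‖⁻¹ • O g₂ g₁ = _
      rw [hO2, nw2]
    rw [hU1, hU2, ← hvdef, nv]
  have j1gv : ⟪g₁, gv⟫ = q⁻¹ * (a * s) := by
    rw [hgv, real_inner_smul_right, j1v]
  have j2gv : ⟪g₂, gv⟫ = q⁻¹ * (b * s) := by
    rw [hgv, real_inner_smul_right, j2v]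
  have ngv : ‖gv‖ = 1 := by
    rw [hgv, norm_smul, nv, Real.norm_eq_abs, abs_of_pos (inv_pos.2 hq0), inv_mul_cancel₀ hq0.ne']
  have key : ‖gConFIG‖ = q⁻¹ * ((a + b) * s) := by
    show ‖(⟪g₁, gv⟫ + ⟪g₂, gv⟫) • gv‖ = _
    rw [norm_smul, ngv, mul_one, j1gv, j2gv, Real.norm_eq_abs, abs_of_nonneg (by positivity)]
    ring
  rw [key]
  have hsq : Real.sqrt ((1 + c) / 2) = q⁻¹ * s := by
    have h : (1 + c) / 2 = (q⁻¹ * s) ^ 2 := by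
      rw [mul_pow, hssq, inv_pow, hqsq]
      have hne : (1:ℝ) - c ≠ 0 := by linarith
      field_simp
      ring
    rw [h, Real.sqrt_sq (by positivity)]
  rw [hsq]
  ring
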